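/- Let Q be a rack. Then con_{Z(Dis(Q))} equals the set of pairs (a,b) such that (u*a)*(b*v) = (u*b)*(a*v) for all u,v ∈ Q. -/
import Mathlib


structure LeftQuasigroup (Q : Type*) where
  op : Q → Q → Q
  dv : Q → Q → Q
  dv_op : ∀ x y, dv x (op x y) = y
  op_dv : ∀ x y, op x (dv x y) = y

namespace LeftQuasigroup

variable {Q : Type*} (S : LeftQuasigroup Q)

/-- The left translation by `a`, as a permutation of `Q`. -/
def L (a : Q) : Equiv.Perm Q :=
  ⟨S.op a, S.dv a, S.dv_op a, S.op_dv a⟩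

/-- The left multiplication group. -/
def LMlt : Subgroup (Equiv.Perm Q) :=
  Subgroup.closure (Set.range S.L)

/-- The displacement group. -/
def Dis : Subgroup (Equiv.Perm Q) :=
  Subgroup.closure { f | ∃ a b, f = S.L a * (S.L b)⁻¹ }

/-- `α` is a congruence of the left quasigroup. -/
def IsCongruence (α : Q → Q → Prop) : Prop :=
  Equivalence α ∧
  (∀ a b c d, α a b → α c d → α (S.op a c) (S.op b d)) ∧
  (∀ a b c d, α a b → α c d → α (S.dv a c) (S.dv b d))

/-- The displacement group relative to `α`: the smallest normal subgroup of
`LMlt` containing all `L a * (L b)⁻¹` with `α a b`, given explicitly as the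
subgroup generated by the `LMlt`-conjugates of such elements. -/
def DisRel (α : Q → Q → Prop) : Subgroup (Equiv.Perm Q) :=
  Subgroup.closure
    { f | ∃ g ∈ S.LMlt, ∃ a b, α a b ∧ f = g * (S.L a * (S.L b)⁻¹) * g⁻¹ }

/-- The set `Dis^α = {h ∈ Dis(Q) : h(a) α a for all a}`. -/
def DisUpSet (α : Q → Q → Prop) : Set (Equiv.Perm Q) :=
  { h | h ∈ S.Dis ∧ ∀ a, α (h a) a }

/-- Left self-distributivity, making a left quasigroup a rack. -/
def IsRack : Prop :=
  ∀ x y z, S.op x (S.op y z) = S.op (S.op x y) (S.op x z)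

end LeftQuasigroup

open LeftQuasigroup

private lemma grp_iff {G : Type*} [Group G] (a b u : G) :
    (a * b⁻¹) * (u * b⁻¹) = (u * b⁻¹) * (a * b⁻¹) ↔ a * u⁻¹ * b = b * u⁻¹ * a := by
  constructor <;> intro h
  · have hc : Commute (a * b⁻¹) (u * b⁻¹) := h
    have h2 := hc.inv_right.eq
    calc a * u⁻¹ * b = (a * b⁻¹) * (u * b⁻¹)⁻¹ * b := by group
      _ = (u * b⁻¹)⁻¹ * (a * b⁻¹) * b := by rw [h2]
      _ = b * u⁻¹ * a := by group
  · have hc : Commute (a * b⁻¹) (u * b⁻¹)⁻¹ := by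
      show (a * b⁻¹) * (u * b⁻¹)⁻¹ = (u * b⁻¹)⁻¹ * (a * b⁻¹)
      calc (a * b⁻¹) * (u * b⁻¹)⁻¹ = (a * u⁻¹ * b) * b⁻¹ := by group
        _ = (b * u⁻¹ * a) * b⁻¹ := by rw [h]
        _ = (u * b⁻¹)⁻¹ * (a * b⁻¹) := by group
    simpa using hc.inv_right.eq

/-- `con_{Z(Dis(Q))}` is exactly the set of pairs `(a,b)` such that
`(u*a)*(b*v) = (u*b)*(a*v)` for all `u, v`. -/
theorem stmt_16 {Q : Type*} (S : LeftQuasigroup Q) (hSD : S.IsRack) :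
    ∀ a b : Q,
      (S.L a * (S.L b)⁻¹ ∈ S.Dis ∧
        ∀ g ∈ S.Dis, (S.L a * (S.L b)⁻¹) * g = g * (S.L a * (S.L b)⁻¹)) ↔
      (∀ u v : Q, S.op (S.op u a) (S.op b v) = S.op (S.op u b) (S.op a v)) := by
  have Lop : ∀ x y : Q, S.L (S.op x y) = S.L x * S.L y * (S.L x)⁻¹ := by
    intro x y
    ext z
    have h1 : S.op x (S.op y (S.dv x z)) = S.op (S.op x y) z := by
      rw [hSD x y (S.dv x z), S.op_dv]
    simpa [LeftQuasigroup.L, Equiv.Perm.mul_apply] using h1.symm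
  have happ : ∀ u c d v : Q,
      S.op (S.op u c) (S.op d v) = (S.L u * (S.L c * (S.L u)⁻¹ * S.L d)) v := by
    intro u c d v
    have h0 : S.op (S.op u c) (S.op d v) = S.L (S.op u c) (S.L d v) := rfl
    rw [h0, Lop]
    simp [Equiv.Perm.mul_apply, mul_assoc]
  intro a b
  constructor
  · rintro ⟨-, hcomm⟩ u v
    have hg : S.L u * (S.L b)⁻¹ ∈ S.Dis := Subgroup.subset_closure ⟨u, b, rfl⟩
    have key := (grp_iff (S.L a) (S.L b) (S.L u)).mp (hcomm _ hg)
    have e : S.L u * (S.L a * (S.L u)⁻¹ * S.L b) = S.L u * (S.L b * (S.L u)⁻¹ * S.L a) := by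
      rw [key]
    rw [happ, happ, e]
  · intro hyp
    have key : ∀ u : Q, Commute (S.L a * (S.L b)⁻¹) (S.L u * (S.L b)⁻¹) := by
      intro u
      have e : S.L u * (S.L a * (S.L u)⁻¹ * S.L b) = S.L u * (S.L b * (S.L u)⁻¹ * S.L a) := by
        ext v
        have := hyp u v
        rwa [happ, happ] at this
      exact (grp_iff _ _ _).mpr (mul_left_cancel e)
    refine ⟨Subgroup.subset_closure ⟨a, b, rfl⟩, ?_⟩
    have hle : S.Dis ≤ Subgroup.centralizer {S.L a * (S.L b)⁻¹} := by
      refine (Subgroup.closure_le _).mpr ?_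
      rintro f ⟨u, v, rfl⟩
      rw [SetLike.mem_coe, Subgroup.mem_centralizer_iff]
      rintro x hx
      rw [Set.mem_singleton_iff] at hx
      subst hx
      have h1 := key u
      have h2 := (key v).inv_right
      have h3 := h1.mul_right h2
      have e : (S.L u * (S.L b)⁻¹) * (S.L v * (S.L b)⁻¹)⁻¹ = S.L u * (S.L v)⁻¹ := by group
      rw [e] at h3
      exact h3.eq
    intro g hg
    exact (Subgroup.mem_centralizer_iff.mp (hle hg)) _ rfl
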